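/- Fix K ≥ 1, positive reals λ_1,…,λ_K with Λ = Σ_k λ_k, a total n ∈ ℕ, and nonnegative integers a_1,…,a_K with Σ_k a_k = n. For ℓ ∈ ℕ large enough that λ_k/ℓ ≤ 1 for all k, define f_ℓ(a_1,…,a_K) = Π_{k=1}^K C(ℓ, a_k) (λ_k/ℓ)^{a_k} (1 − λ_k/ℓ)^{ℓ − a_k}. Then, as ℓ → ∞, the ratio f_ℓ(a_1,…,a_K) / (Σ over all tuples (a'_1,…,a'_K) of nonnegative integers with Σ_k a'_k = n of f_ℓ(a'_1,…,a'_K)) converges to the multinomial probability (n! / Π_{k=1}^K a_k!) · Π_{k=1}^K (λ_k / Λ)^{a_k}. -/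

import Mathlib

open Filter Nat Topology

lemma coord_tendsto (lam : ℝ) (hl : 0 < lam) (m : ℕ) :
    Tendsto (fun ℓ : ℕ => (ℓ.choose m : ℝ) * (lam / ℓ) ^ m * (1 - lam / ℓ) ^ (ℓ - m))
      atTop (𝓝 (lam ^ m / m ! * Real.exp (-lam))) := by
  have hdiv : ∀ c : ℝ, Tendsto (fun ℓ : ℕ => c / (ℓ : ℝ)) atTop (𝓝 0) := by
    intro c
    simpa [mul_one_div, div_eq_mul_inv] using tendsto_one_div_atTop_nhds_zero_nat.const_mul c
  have h1 : Tendsto (fun ℓ : ℕ => ∏ i ∈ Finset.range m, (1 - (i : ℝ) / ℓ)) atTop (𝓝 1) := by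
    have := tendsto_finset_prod (Finset.range m)
      (fun i _ => (tendsto_const_nhds.sub (hdiv (i : ℝ)) :
        Tendsto (fun ℓ : ℕ => (1 : ℝ) - (i : ℝ) / ℓ) atTop (𝓝 (1 - 0))))
    simpa using this
  have hbase : Tendsto (fun ℓ : ℕ => 1 - lam / (ℓ : ℝ)) atTop (𝓝 1) := by
    simpa using tendsto_const_nhds.sub (hdiv lam)
  have hexp : Tendsto (fun ℓ : ℕ => (1 - lam / (ℓ : ℝ)) ^ ℓ) atTop (𝓝 (Real.exp (-lam))) := by
    simpa [sub_eq_add_neg, neg_div] using Real.tendsto_one_add_div_pow_exp (-lam)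
  have hm : Tendsto (fun ℓ : ℕ => (1 - lam / (ℓ : ℝ)) ^ m) atTop (𝓝 1) := by
    simpa using hbase.pow m
  have htot : Tendsto
      (fun ℓ : ℕ => lam ^ m / m ! * (∏ i ∈ Finset.range m, (1 - (i : ℝ) / ℓ)) *
        ((1 - lam / (ℓ : ℝ)) ^ ℓ / (1 - lam / (ℓ : ℝ)) ^ m)) atTop
      (𝓝 (lam ^ m / m ! * Real.exp (-lam))) := by
    have := ((tendsto_const_nhds (x := lam ^ m / (m ! : ℝ))).mul h1).mul (hexp.div hm one_ne_zero)
    simpa using this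
  refine htot.congr' ?_
  filter_upwards [eventually_ge_atTop (m + ⌈lam⌉₊ + 1)] with ℓ hℓ
  have hm_le : m ≤ ℓ := by omega
  have hℓ0 : (0 : ℝ) < ℓ := by
    have : 0 < ℓ := by omega
    exact_mod_cast this
  have hlamlt : lam < ℓ := by
    calc lam ≤ ⌈lam⌉₊ := Nat.le_ceil lam
    _ < ℓ := by exact_mod_cast Nat.lt_of_lt_of_le (by omega) hℓ
  have hb0 : (1 : ℝ) - lam / ℓ ≠ 0 := by
    have : lam / ℓ < 1 := (div_lt_one hℓ0).2 hlamlt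
    linarith
  have hchoose : (ℓ.choose m : ℝ) * m ! = ∏ i ∈ Finset.range m, ((ℓ : ℝ) - i) := by
    have h := Nat.descFactorial_eq_factorial_mul_choose ℓ m
    have h2 := Nat.descFactorial_eq_prod_range ℓ m
    have h3 : ((∏ i ∈ Finset.range m, (ℓ - i) : ℕ) : ℝ) = ∏ i ∈ Finset.range m, ((ℓ : ℝ) - i) := by
      push_cast
      refine Finset.prod_congr rfl fun i hi => ?_
      have : i ≤ ℓ := le_trans (Nat.le_of_lt (Finset.mem_range.1 hi)) hm_le
      rw [Nat.cast_sub this]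
    rw [← h3, ← h2, h]
    push_cast
    ring
  have hprod : ∏ i ∈ Finset.range m, (1 - (i : ℝ) / ℓ)
      = (∏ i ∈ Finset.range m, ((ℓ : ℝ) - i)) / (ℓ : ℝ) ^ m := by
    rw [eq_div_iff (by positivity)]
    have hp : (ℓ : ℝ) ^ m = ∏ _i ∈ Finset.range m, (ℓ : ℝ) := by
      rw [Finset.prod_const, Finset.card_range]
    rw [hp, ← Finset.prod_mul_distrib]
    refine Finset.prod_congr rfl fun i _ => ?_
    field_simp
  have hc2 : (ℓ.choose m : ℝ) = (∏ i ∈ Finset.range m, ((ℓ : ℝ) - i)) / m ! := by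
    rw [eq_div_iff (by positivity : (m ! : ℝ) ≠ 0)]
    exact hchoose
  rw [hprod, pow_sub₀ _ hb0 hm_le, hc2, div_pow, div_eq_mul_inv]
  field_simp

/-- **Conditioned binomial product converges to the multinomial law
(coarse-grained side of ensemble equivalence).**
Fix `K ≥ 1`, rates `λ k > 0` with `Λ = ∑ λ k`, a total `n`, and a configuration
`a : Fin K → ℕ` with `∑ a k = n`.  For `ℓ` the joint coarse-grained weight is
`f ℓ a = ∏ k, C(ℓ, a k) (λ k/ℓ)^(a k) (1 − λ k/ℓ)^(ℓ − a k)` (each coordinate an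
independent `Binomial(ℓ, λ k/ℓ)`).  Conditioning on the total `n`, i.e. normalizing
over all configurations summing to `n`, the weight of `a` converges as `ℓ → ∞` to the
multinomial probability `(n! / ∏ (a k)!) · ∏ (λ k / Λ)^(a k)`. -/
theorem conditioned_binomial_tendsto_multinomial (K : ℕ) (hK : 1 ≤ K)
    (lam : Fin K → ℝ) (hlam : ∀ k, 0 < lam k) (Lam : ℝ) (hLam : Lam = ∑ k : Fin K, lam k)
    (n : ℕ) (a : Fin K → ℕ) (ha : ∑ k : Fin K, a k = n)
    (f : ℕ → (Fin K → ℕ) → ℝ)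
    (hf : ∀ ℓ : ℕ, ∀ b : Fin K → ℕ,
      f ℓ b = ∏ k : Fin K,
        (Nat.choose ℓ (b k) : ℝ) * (lam k / ℓ) ^ (b k) * (1 - lam k / ℓ) ^ (ℓ - b k)) :
    Tendsto
      (fun ℓ : ℕ => f ℓ a / ∑ b ∈ Finset.Nat.antidiagonalTuple K n, f ℓ b)
      atTop
      (nhds ((n ! : ℝ) / (∏ k : Fin K, ((a k)! : ℝ)) *
        ∏ k : Fin K, (lam k / Lam) ^ (a k))) := by
  classical
  have hne : (Finset.univ : Finset (Fin K)).Nonempty := ⟨⟨0, hK⟩, Finset.mem_univ _⟩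
  have hLam0 : 0 < Lam := hLam ▸ Finset.sum_pos (fun k _ => hlam k) hne
  set P : (Fin K → ℕ) → ℝ :=
    fun b => ∏ k : Fin K, (lam k ^ (b k) / (b k)! * Real.exp (-lam k)) with hP
  have hfb : ∀ b : Fin K → ℕ, Tendsto (fun ℓ : ℕ => f ℓ b) atTop (𝓝 (P b)) := by
    intro b
    have := tendsto_finset_prod (Finset.univ : Finset (Fin K))
      (fun k _ => coord_tendsto (lam k) (hlam k) (b k))
    exact Tendsto.congr (fun ℓ => (hf ℓ b).symm) this
  have hPval : ∀ b : Fin K → ℕ,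
      P b = Real.exp (-Lam) * ∏ k : Fin K, (lam k ^ (b k) / ((b k)! : ℝ)) := by
    intro b
    simp only [hP]
    rw [Finset.prod_mul_distrib, ← Real.exp_sum, Finset.sum_neg_distrib, ← hLam, mul_comm]
  have hsum2 : ∑ b ∈ Finset.Nat.antidiagonalTuple K n,
      ∏ k : Fin K, (lam k ^ (b k) / ((b k)! : ℝ)) = Lam ^ n / n ! := by
    have key : (Lam : ℝ) ^ n = ∑ b ∈ Finset.Nat.antidiagonalTuple K n,
        (Nat.multinomial Finset.univ b : ℝ) * ∏ k : Fin K, lam k ^ (b k) := by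
      rw [hLam, Finset.sum_pow_eq_sum_piAntidiag,
        Finset.piAntidiag_univ_fin_eq_antidiagonalTuple]
    rw [eq_div_iff (by positivity : (n ! : ℝ) ≠ 0), key, Finset.sum_mul]
    refine Finset.sum_congr rfl fun b hb => ?_
    have hbsum : ∑ k : Fin K, b k = n := (Finset.Nat.mem_antidiagonalTuple.1 hb)
    have hspec := Nat.multinomial_spec (Finset.univ : Finset (Fin K)) b
    rw [hbsum] at hspec
    have hspecR : (∏ k : Fin K, ((b k)! : ℝ)) * (Nat.multinomial Finset.univ b : ℝ)
        = (n ! : ℝ) := by exact_mod_cast hspec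
    have hfacne : (∏ k : Fin K, ((b k)! : ℝ)) ≠ 0 := by positivity
    rw [Finset.prod_div_distrib, ← hspecR]
    field_simp
  have hsumP : ∑ b ∈ Finset.Nat.antidiagonalTuple K n, P b
      = Real.exp (-Lam) * (Lam ^ n / n !) := by
    simp only [hPval, ← Finset.mul_sum, hsum2]
  have hDne : Real.exp (-Lam) * (Lam ^ n / n !) ≠ 0 := by positivity
  have hden : Tendsto (fun ℓ : ℕ => ∑ b ∈ Finset.Nat.antidiagonalTuple K n, f ℓ b) atTop
      (𝓝 (Real.exp (-Lam) * (Lam ^ n / n !))) := by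
    rw [← hsumP]
    exact tendsto_finset_sum _ fun b _ => hfb b
  have hmain := (hfb a).div hden hDne
  simp only [Pi.div_def] at hmain
  convert hmain using 2
  rw [hPval a]
  have hprodpow : ∏ k : Fin K, (lam k / Lam) ^ (a k)
      = (∏ k : Fin K, lam k ^ (a k)) / Lam ^ n := by
    simp only [div_pow, Finset.prod_div_distrib, Finset.prod_pow_eq_pow_sum, ha]
  rw [hprodpow, Finset.prod_div_distrib]
  have h1 : (∏ k : Fin K, ((a k)! : ℝ)) ≠ 0 := by positivity
  have h2 : Real.exp (-Lam) ≠ 0 := Real.exp_ne_zero _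
  have h3 : (n ! : ℝ) ≠ 0 := by positivity
  have h4 : Lam ^ n ≠ 0 := by positivity
  field_simp
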